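/- Let ⟨e_α^m : α < λ, m < ω⟩ be a generalized C-sequence, i.e., each e_α^m is club in α (for limit α) and e_α^m ⊆ e_α^{m+1}. For fixed α < β < λ, there exists m₀ < ω such that for all m ≥ m₀, the m-walk from β to α equals the m₀-walk from β to α: ρ₂^m(α,β) = ρ₂^{m₀}(α,β) and β_i^m(α,β) = β_i^{m₀}(α,β) for all i ≤ ρ₂^m(α,β). -/

import Mathlib

/-- `E` is a closed unbounded subset of (the ordinals below) `β`. -/
def IsClubIn (E : Set Ordinal) (β : Ordinal) : Prop :=
  E ⊆ Set.Iio β ∧ (∀ a < β, ∃ b ∈ E, a ≤ b) ∧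
    (∀ a < β, a ≠ 0 → sSup (E ∩ Set.Iio a) = a → a ∈ E)

/-- The minimal walk from `β` towards `α` along the C-sequence `e`. -/
noncomputable def walk (e : Ordinal → Set Ordinal) (α β : Ordinal) : ℕ → Ordinal
  | 0 => β
  | n + 1 => sInf (e (walk e α β n) ∩ Set.Ici α)

lemma walk_shift (e : Ordinal → Set Ordinal) (α β : Ordinal) (i : ℕ) :
    walk e α β (i + 1) = walk e α (walk e α β 1) i := by
  induction i with
  | zero => rfl
  | succ n ih =>
    show sInf (e (walk e α β (n + 1)) ∩ Set.Ici α) = _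
    rw [ih]
    rfl

lemma ord_sInf_empty : sInf (∅ : Set Ordinal) = 0 := by
  simp only [sInf, InfSet.sInf]
  rw [dif_neg Set.not_nonempty_empty]
  rfl

section

variable {lam : Cardinal} {e : ℕ → Ordinal → Set Ordinal}

lemma step_zero (h0 : ∀ m, e m 0 = ∅)
    (hsucc : ∀ m, ∀ β : Ordinal, e m (β + 1) = {β})
    (hlim : ∀ m, ∀ β < lam.ord, Order.IsSuccLimit β → IsClubIn (e m β) β)
    {v α : Ordinal} (hv : v < lam.ord) (hvα : v ≤ α) (m : ℕ) :
    sInf (e m v ∩ Set.Ici α) = 0 := by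
  have hempty : e m v ∩ Set.Ici α = ∅ := by
    rcases Ordinal.zero_or_succ_or_isSuccLimit v with h | ⟨a, rfl⟩ | h
    · rw [h, h0]; simp
    · rw [← Ordinal.add_one_eq_succ] at hvα ⊢
      rw [hsucc]
      ext x
      simp only [Set.mem_inter_iff, Set.mem_singleton_iff, Set.mem_Ici, Set.mem_empty_iff_false,
        iff_false, not_and]
      intro hxa
      rw [hxa]
      exact not_le.2 (lt_of_lt_of_le (Order.lt_succ a) (Ordinal.add_one_eq_succ a ▸ hvα))
    · ext x
      simp only [Set.mem_inter_iff, Set.mem_Ici, Set.mem_empty_iff_false, iff_false, not_and]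
      intro hx hax
      exact absurd ((hlim m v hv h).1 hx) (not_lt.2 (hvα.trans hax))
  rw [hempty, ord_sInf_empty]

lemma aux (h0 : ∀ m, e m 0 = ∅)
    (hsucc : ∀ m, ∀ β : Ordinal, e m (β + 1) = {β})
    (hlim : ∀ m, ∀ β < lam.ord, Order.IsSuccLimit β → IsClubIn (e m β) β)
    (hsub : ∀ m, ∀ γ : Ordinal, e m γ ⊆ e (m + 1) γ) :
    ∀ β < lam.ord, ∀ α ≤ β,
      ∃ m₀ : ℕ, ∀ m, m₀ ≤ m → ∀ i : ℕ, walk (e m) α β i = walk (e m₀) α β i := by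
  have hmono : ∀ γ : Ordinal, ∀ {m m' : ℕ}, m ≤ m' → e m γ ⊆ e m' γ := by
    intro γ m m' h
    exact monotone_nat_of_le_succ (f := fun m => e m γ) (fun n => hsub n γ) h
  intro β
  induction β using Ordinal.induction with
  | h β IH =>
    intro hβ α hαβ
    rcases eq_or_lt_of_le hαβ with rfl | hlt
    · -- α = β : walk is m-independent (α, 0, 0, ...)
      refine ⟨0, fun m _ i => ?_⟩
      cases i with
      | zero => rfl
      | succ n =>
        have key : ∀ m' : ℕ, ∀ n : ℕ, walk (e m') α α (n + 1) = 0 := by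
          intro m' n
          induction n with
          | zero => exact step_zero h0 hsucc hlim hβ le_rfl m'
          | succ k ih =>
            show sInf (e m' (walk (e m') α α (k + 1)) ∩ Set.Ici α) = 0
            rw [ih]
            exact step_zero h0 hsucc hlim ((zero_le (a := α)).trans_lt hβ)
              (zero_le (a := α)) m'
        exact (key m n).trans (key 0 n).symm
    · -- α < β
      have hne : ∀ m : ℕ, (e m β ∩ Set.Ici α).Nonempty := by
        intro m
        rcases Ordinal.zero_or_succ_or_isSuccLimit β with h | ⟨a, rfl⟩ | h
        · exact absurd (h ▸ hlt) ((not_lt_zero (a := α)))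
        · refine ⟨a, ?_, Order.lt_succ_iff.mp hlt⟩
          rw [← Ordinal.add_one_eq_succ, hsucc]
          exact Set.mem_singleton a
        · obtain ⟨b, hb, hab⟩ := (hlim m β hβ h).2.1 α hlt
          exact ⟨b, hb, hab⟩
      set f : ℕ → Ordinal := fun m => sInf (e m β ∩ Set.Ici α) with hf
      have hmem : ∀ m, f m ∈ e m β ∩ Set.Ici α := fun m => csInf_mem (hne m)
      have hanti : ∀ {m m' : ℕ}, m ≤ m' → f m' ≤ f m := by
        intro m m' h
        exact csInf_le (OrderBot.bddBelow _) ⟨hmono β h (hmem m).1, (hmem m).2⟩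
      obtain ⟨m₁, hm₁⟩ : ∃ m₁, f m₁ = sInf (Set.range f) :=
        (csInf_mem (Set.range_nonempty f) : sInf (Set.range f) ∈ Set.range f).imp
          (fun _ h => h)
      have hconst : ∀ m, m₁ ≤ m → f m = f m₁ := by
        intro m hm
        exact le_antisymm (hanti hm) (hm₁ ▸ csInf_le (OrderBot.bddBelow _) ⟨m, rfl⟩)
      set γ := f m₁ with hγ
      have hγβ : γ < β := by
        rcases Ordinal.zero_or_succ_or_isSuccLimit β with h | ⟨a, rfl⟩ | h
        · exact absurd (h ▸ hlt) ((not_lt_zero (a := α)))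
        · have h1 := (hmem m₁).1
          rw [← Ordinal.add_one_eq_succ, hsucc] at h1
          rw [hγ, h1]
          exact Ordinal.add_one_eq_succ a ▸ Order.lt_succ a
        · exact (hlim m₁ β hβ h).1 (hmem m₁).1
      have hαγ : α ≤ γ := (hmem m₁).2
      obtain ⟨m₂, hm₂⟩ := IH γ hγβ (hγβ.trans hβ) α hαγ
      refine ⟨max m₁ m₂, fun m hm i => ?_⟩
      cases i with
      | zero => rfl
      | succ j =>
        have step1 : ∀ m', m₁ ≤ m' → walk (e m') α β 1 = γ := by
          intro m' h
          show sInf (e m' (walk (e m') α β 0) ∩ Set.Ici α) = γ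
          exact hconst m' h
        have hmm₁ : m₁ ≤ m := le_trans (le_max_left _ _) hm
        have hmm₂ : m₂ ≤ m := le_trans (le_max_right _ _) hm
        calc walk (e m) α β (j + 1)
            = walk (e m) α (walk (e m) α β 1) j := walk_shift _ _ _ _
          _ = walk (e m) α γ j := by rw [step1 m hmm₁]
          _ = walk (e m₂) α γ j := hm₂ m hmm₂ j
          _ = walk (e (max m₁ m₂)) α γ j := (hm₂ _ (le_max_right _ _) j).symm
          _ = walk (e (max m₁ m₂)) α (walk (e (max m₁ m₂)) α β 1) j := by
              rw [step1 _ (le_max_left _ _)]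
          _ = walk (e (max m₁ m₂)) α β (j + 1) := (walk_shift _ _ _ _).symm

end

/-- for a generalized C-sequence `⟨e^m_γ : γ < λ, m < ω⟩` (with
`e^m_γ ⊆ e^{m+1}_γ`) and fixed `α < β < λ`, there is `m₀` such that for all
`m ≥ m₀` the `m`-walk from `β` to `α` coincides (step by step, hence also in
length) with the `m₀`-walk. -/
theorem stmt9 (lam : Cardinal) (hreg : lam.IsRegular)
    (hunc : Cardinal.aleph0 < lam)
    (e : ℕ → Ordinal → Set Ordinal)
    (h0 : ∀ m, e m 0 = ∅)
    (hsucc : ∀ m, ∀ β : Ordinal, e m (β + 1) = {β})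
    (hlim : ∀ m, ∀ β < lam.ord, Order.IsSuccLimit β → IsClubIn (e m β) β)
    (hsub : ∀ m, ∀ γ : Ordinal, e m γ ⊆ e (m + 1) γ)
    (α β : Ordinal) (hαβ : α < β) (hβ : β < lam.ord) :
    ∃ m₀ : ℕ, ∀ m, m₀ ≤ m → ∀ i : ℕ, walk (e m) α β i = walk (e m₀) α β i := by
  exact aux h0 hsucc hlim hsub β hβ α hαβ.le
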